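/- arXiv:2006.09345 — 4 statements merged into one kernel-verified Lean document; each statement's English description precedes it below -/
import Mathlib

section
/- Let A > 0, B ≥ 0 and α > 1 be real numbers. There exists a constant C > 0, depending only on A, B and α, such that for every y₀ ≥ 0 and every nonnegative solution y of the initial value problem (⋆) one has y(t) ≤ C·t^{1/(1−α)} + C for all t > 0. -/
open Set Filter Real Topology

private lemma add_rpow_aux {a b α : ℝ} (ha : 0 ≤ a) (hb : 0 ≤ b) (hα : 1 ≤ α) :
    a ^ α + b ^ α ≤ (a + b) ^ α := by
  lift a to NNReal using ha
  lift b to NNReal using hb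
  have := NNReal.add_rpow_le_rpow_add a b hα
  exact_mod_cast this

/-- For real numbers `A > 0`, `B ≥ 0`, `α > 1` there is a constant
`C > 0`, depending only on `A`, `B` and `α`, such that every nonnegative solution
`y` of the initial value problem `y' = -A y^α + B`, `y 0 = y₀` with `y₀ ≥ 0`
satisfies `y t ≤ C * t^(1/(1-α)) + C` for all `t > 0`. -/
theorem stmt0 (A B α : ℝ) (hA : 0 < A) (hB : 0 ≤ B) (hα : 1 < α) :
    ∃ C : ℝ, 0 < C ∧
      ∀ (y₀ : ℝ), 0 ≤ y₀ →
        ∀ y : ℝ → ℝ,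
          ContinuousOn y (Set.Ici 0) →
          (∀ t : ℝ, 0 < t → HasDerivAt y (-A * (y t) ^ α + B) t) →
          y 0 = y₀ →
          (∀ t : ℝ, 0 ≤ t → 0 ≤ y t) →
          ∀ t : ℝ, 0 < t → y t ≤ C * t ^ (1 / (1 - α)) + C := by
  set p : ℝ := 1 / (1 - α) with hp_def
  have h1α : 1 - α < 0 := by linarith
  have hαpos : (0:ℝ) < α := by linarith
  have hp_neg : p < 0 := div_neg_of_pos_of_neg one_pos h1α
  have h1ne : (1:ℝ) - α ≠ 0 := by linarith
  have hAα : (0:ℝ) < A * (α - 1) := mul_pos hA (by linarith)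
  set K : ℝ := (A * (α - 1)) ^ p with hK_def
  have hK : 0 < K := Real.rpow_pos_of_pos hAα p
  set M : ℝ := (B / A) ^ (1 / α) + 1 with hM_def
  have hM1 : 1 ≤ M := by
    have : (0:ℝ) ≤ (B / A) ^ (1 / α) := Real.rpow_nonneg (div_nonneg hB hA.le) _
    rw [hM_def]; linarith
  have hM0 : 0 < M := by linarith
  -- key: A * M ^ α > B
  have hAMα : B < A * M ^ α := by
    have h1 : ((B / A) ^ (1 / α)) ^ α + (1:ℝ) ^ α ≤ M ^ α :=
      add_rpow_aux (Real.rpow_nonneg (div_nonneg hB hA.le) _) zero_le_one hα.le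
    have h2 : ((B / A) ^ (1 / α)) ^ α = B / A := by
      rw [← Real.rpow_mul (by positivity), one_div_mul_cancel hαpos.ne', Real.rpow_one]
    rw [h2, Real.one_rpow] at h1
    have h3 : A * (B / A + 1) ≤ A * M ^ α := by
      exact mul_le_mul_of_nonneg_left h1 hA.le
    rw [mul_add, mul_div_cancel₀ _ hA.ne', mul_one] at h3
    linarith
  refine ⟨max K M, lt_of_lt_of_le hM0 (le_max_right _ _), ?_⟩
  intro y₀ hy₀ y hycont hyderiv hy0 hynn t ht
  -- the barrier
  set w : ℝ → ℝ := fun x => K * x ^ p + M with hw_def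
  -- derivative of the barrier at positive points
  have hpα : p * α = p - 1 := by
    rw [hp_def]
    field_simp
    ring
  have hKα : K ^ α = K / (A * (α - 1)) := by
    rw [hK_def, ← Real.rpow_mul hAα.le, hpα, Real.rpow_sub hAα, Real.rpow_one]
  have hwderiv : ∀ x : ℝ, 0 < x → HasDerivAt w (-A * (K * x ^ p) ^ α) x := by
    intro x hx
    have h := (Real.hasDerivAt_rpow_const (x := x) (p := p) (Or.inl hx.ne')).const_mul K
    have heq : K * (p * x ^ (p - 1)) = -A * (K * x ^ p) ^ α := by
      rw [Real.mul_rpow hK.le (Real.rpow_nonneg hx.le _), ← Real.rpow_mul hx.le,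
        hpα, hKα]
      rw [hp_def]
      have hα1 : α - 1 ≠ 0 := by linarith
      field_simp
      ring
    rw [heq] at h
    exact h.add_const M
  -- find a small starting point ε where y ε ≤ w ε
  have htend : Tendsto w (𝓝[>] (0:ℝ)) atTop := by
    have h1 : Tendsto (fun x : ℝ => x ^ p) (𝓝[>] (0:ℝ)) atTop := by
      have h2 : Tendsto (fun x : ℝ => (x⁻¹) ^ (-p)) (𝓝[>] (0:ℝ)) atTop :=
        (tendsto_rpow_atTop (by linarith : (0:ℝ) < -p)).comp tendsto_inv_nhdsGT_zero
      refine h2.congr' ?_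
      filter_upwards [self_mem_nhdsWithin] with x (hx : 0 < x)
      rw [Real.inv_rpow hx.le, ← Real.rpow_neg hx.le, neg_neg]
    exact tendsto_atTop_add_const_right _ M (h1.const_mul_atTop hK)
  have hytend : Tendsto y (𝓝[>] (0:ℝ)) (𝓝 y₀) := by
    have := (hycont 0 Set.self_mem_Ici).tendsto
    rw [hy0] at this
    exact this.mono_left (nhdsWithin_mono 0 (fun x hx => Set.mem_Ici.mpr (le_of_lt hx)))
  have hev : ∀ᶠ x in 𝓝[>] (0:ℝ), (y x ≤ w x ∧ x < t) ∧ 0 < x := by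
    filter_upwards [htend.eventually_ge_atTop (y₀ + 1),
      hytend.eventually_le_const (lt_add_one y₀), Ioo_mem_nhdsGT ht,
      self_mem_nhdsWithin] with x h1 h2 h3 h4
    exact ⟨⟨h2.trans h1, h3.2⟩, h4⟩
  obtain ⟨ε, ⟨hyεw, hεlt⟩, hεpos⟩ := hev.exists
  -- comparison on [ε, t]
  have hcomp : ∀ ⦃x⦄, x ∈ Icc ε t → y x ≤ w x := by
    refine image_le_of_deriv_right_lt_deriv_boundary'
      (f' := fun x => -A * (y x) ^ α + B) (B' := fun x => -A * (K * x ^ p) ^ α)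
      (hycont.mono (fun x hx => le_trans hεpos.le hx.1))
      (fun x hx => (hyderiv x (lt_of_lt_of_le hεpos hx.1)).hasDerivWithinAt)
      hyεw
      (fun x hx => (hwderiv x (lt_of_lt_of_le hεpos hx.1)).continuousAt.continuousWithinAt)
      (fun x hx => (hwderiv x (lt_of_lt_of_le hεpos hx.1)).hasDerivWithinAt)
      ?_
    intro x hx hcontact
    have hxpos : 0 < x := lt_of_lt_of_le hεpos hx.1
    have hz : 0 < K * x ^ p := mul_pos hK (Real.rpow_pos_of_pos hxpos p)
    have hsup : (K * x ^ p) ^ α + M ^ α ≤ (K * x ^ p + M) ^ α :=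
      add_rpow_aux hz.le hM0.le hα.le
    have hyx : y x = K * x ^ p + M := hcontact
    show -A * (y x) ^ α + B < -A * (K * x ^ p) ^ α
    rw [hyx]
    nlinarith [hsup, hAMα]
  have := hcomp ⟨hεlt.le, le_refl t⟩
  have htp : 0 < t ^ p := Real.rpow_pos_of_pos ht p
  have hKC : K ≤ max K M := le_max_left _ _
  have hMC : M ≤ max K M := le_max_right _ _
  simp only [hw_def] at this
  nlinarith [this]
end

section
/- Let A > 0, B ≥ 0 and α > 1 be real numbers, let y₀ ≥ 0 and let y be a nonnegative solution of the initial value problem (⋆). Then y(t) ≤ (A(α−1))^{1/(1−α)}·t^{1/(1−α)} + (B/A)^{1/α} for all t > 0. -/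
open Real Set Filter Topology

lemma aux_superadd {x y p : ℝ} (hx : 0 ≤ x) (hy : 0 ≤ y) (hp : 1 ≤ p) :
    x ^ p + y ^ p ≤ (x + y) ^ p := by
  have h := NNReal.add_rpow_le_rpow_add x.toNNReal y.toNNReal hp
  have h2 := NNReal.coe_le_coe.2 h
  simpa [NNReal.coe_rpow, Real.coe_toNNReal x hx, Real.coe_toNNReal y hy,
    Real.toNNReal_add hx hy] using h2

/-- For `A > 0`, `B ≥ 0`, `α > 1`, `y₀ ≥ 0` and `y` a nonnegative
solution of `y' = -A y^α + B`, `y 0 = y₀`, one has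
`y t ≤ (A(α-1))^(1/(1-α)) * t^(1/(1-α)) + (B/A)^(1/α)` for all `t > 0`. -/
theorem stmt1 (A B α : ℝ) (hA : 0 < A) (hB : 0 ≤ B) (hα : 1 < α)
    (y₀ : ℝ) (hy₀ : 0 ≤ y₀) (y : ℝ → ℝ)
    (hcont : ContinuousOn y (Set.Ici 0))
    (hderiv : ∀ t : ℝ, 0 < t → HasDerivAt y (-A * (y t) ^ α + B) t)
    (hinit : y 0 = y₀)
    (hnonneg : ∀ t : ℝ, 0 ≤ t → 0 ≤ y t) :
    ∀ t : ℝ, 0 < t →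
      y t ≤ (A * (α - 1)) ^ (1 / (1 - α)) * t ^ (1 / (1 - α)) + (B / A) ^ (1 / α) := by
  intro t₀ ht₀
  set p : ℝ := 1 / (1 - α) with hp
  have h1α : (1:ℝ) - α < 0 := by linarith
  have hne : (1:ℝ) - α ≠ 0 := ne_of_lt h1α
  have hpneg : p < 0 := div_neg_of_pos_of_neg one_pos h1α
  have hD : 0 < A * (α - 1) := by nlinarith
  set c : ℝ := (A * (α - 1)) ^ p with hc
  have hcpos : 0 < c := Real.rpow_pos_of_pos hD p
  set K : ℝ := (B / A) ^ (1 / α) with hK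
  have hBA : (0:ℝ) ≤ B / A := div_nonneg hB hA.le
  have hKnn : 0 ≤ K := Real.rpow_nonneg hBA _
  have hAK : A * K ^ α = B := by
    rw [hK, ← Real.rpow_mul hBA, one_div_mul_cancel (by positivity : α ≠ 0), Real.rpow_one]
    field_simp
  have hexp : p - 1 = p * α := by rw [hp]; field_simp; ring
  have hcα : c ^ α = c / (A * (α - 1)) := by
    rw [hc, ← Real.rpow_mul hD.le, ← hexp, Real.rpow_sub hD, Real.rpow_one]
  have hkey : ∀ s : ℝ, 0 < s → c * (p * s ^ (p - 1)) = -A * (c * s ^ p) ^ α := by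
    intro s hs
    have hz : (0:ℝ) ≤ s ^ p := (Real.rpow_pos_of_pos hs p).le
    rw [Real.mul_rpow hcpos.le hz, ← Real.rpow_mul hs.le, ← hexp, hcα]
    have h2 : c * p = -A * (c / (A * (α - 1))) := by
      rw [hp]; field_simp [(by linarith : (0:ℝ) < α - 1).ne', hne]; ring
    calc c * (p * s ^ (p-1)) = (c * p) * s ^ (p-1) := by ring
    _ = -A * (c / (A * (α - 1)) * s ^ (p - 1)) := by rw [h2]; ring
  refine le_of_forall_pos_le_add ?_
  intro ε hε
  by_contra hcon
  push_neg at hcon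
  set w : ℝ → ℝ := fun s => c * s ^ p + K + ε with hw
  have hwderiv : ∀ s : ℝ, 0 < s → HasDerivAt w (c * (p * s ^ (p - 1))) s := by
    intro s hs
    have h := (Real.hasDerivAt_rpow_const (p := p) (Or.inl hs.ne')).const_mul c
    exact (h.add_const K).add_const ε
  have hsuper : ∀ s : ℝ, 0 < s → -A * (w s) ^ α + B < c * (p * s ^ (p - 1)) := by
    intro s hs
    have hz : (0:ℝ) ≤ c * s ^ p := by positivity
    have h1 : (c * s ^ p) ^ α + K ^ α ≤ (c * s ^ p + K) ^ α :=
      aux_superadd hz hKnn hα.le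
    have h2 : (c * s ^ p + K) ^ α < (c * s ^ p + K + ε) ^ α :=
      Real.rpow_lt_rpow (by positivity) (by linarith) (by linarith)
    have h3 := hkey s hs
    have hws : w s = c * s ^ p + K + ε := rfl
    rw [hws]
    nlinarith [h1, h2, h3, hAK, hA]
  -- bound for y on [0, t₀]
  obtain ⟨M, hM⟩ : ∃ M : ℝ, ∀ s ∈ Icc (0:ℝ) t₀, y s ≤ M := by
    obtain ⟨M, hM⟩ := (isCompact_Icc.image_of_continuousOn
      (hcont.mono (Icc_subset_Ici_self))).bddAbove
    exact ⟨M, fun s hs => hM (mem_image_of_mem y hs)⟩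
  -- find a small starting point
  have hlim : Tendsto (fun a : ℝ => c * a ^ p) (𝓝[>] (0:ℝ)) atTop := by
    have h1 : Tendsto (fun a : ℝ => (a⁻¹) ^ (-p)) (𝓝[>] (0:ℝ)) atTop :=
      (tendsto_rpow_atTop (by linarith : (0:ℝ) < -p)).comp tendsto_inv_nhdsGT_zero
    have h2 : Tendsto (fun a : ℝ => a ^ p) (𝓝[>] (0:ℝ)) atTop := by
      refine h1.congr' ?_
      filter_upwards [self_mem_nhdsWithin] with a ha
      rw [Real.inv_rpow (le_of_lt ha), Real.rpow_neg (le_of_lt ha), inv_inv]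
    exact h2.const_mul_atTop hcpos
  obtain ⟨a, haM, ha0, hat⟩ : ∃ a : ℝ, M < c * a ^ p ∧ 0 < a ∧ a < t₀ := by
    have h1 : ∀ᶠ a in 𝓝[>] (0:ℝ), M < c * a ^ p := hlim.eventually_gt_atTop M
    have h2 : Ioo (0:ℝ) t₀ ∈ 𝓝[>] (0:ℝ) := Ioo_mem_nhdsGT ht₀
    obtain ⟨a, h3, h4⟩ := (h1.and (eventually_of_mem h2 (fun x hx => hx))).exists
    exact ⟨a, h3, h4.1, h4.2⟩
  have hya : y a - w a ≤ 0 := by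
    have := hM a ⟨ha0.le, hat.le⟩
    have hws : w a = c * a ^ p + K + ε := rfl
    rw [hws]; linarith
  -- the crossing set
  set S : Set ℝ := Icc a t₀ ∩ (fun s => y s - w s) ⁻¹' Iic 0 with hS
  have hwcont : ContinuousOn w (Icc a t₀) := by
    intro s hs
    have hs0 : 0 < s := lt_of_lt_of_le ha0 hs.1
    exact (((continuousAt_const.mul
      (Real.continuousAt_rpow_const s p (Or.inl hs0.ne'))).add
      continuousAt_const).add continuousAt_const).continuousWithinAt
  have hgcont : ContinuousOn (fun s => y s - w s) (Icc a t₀) :=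
    (hcont.mono (fun x hx => le_trans ha0.le hx.1)).sub hwcont
  have hSclosed : IsClosed S :=
    hgcont.preimage_isClosed_of_isClosed isClosed_Icc isClosed_Iic
  have hSne : S.Nonempty := ⟨a, ⟨le_refl a, hat.le⟩, hya⟩
  have hSbdd : BddAbove S := ⟨t₀, fun x hx => hx.1.2⟩
  set s := sSup S with hsdef
  have hsS : s ∈ S := hSclosed.csSup_mem hSne hSbdd
  have hspos : 0 < s := lt_of_lt_of_le ha0 hsS.1.1
  have hnt : s ≠ t₀ := by
    intro h
    have : y t₀ - w t₀ ≤ 0 := h ▸ hsS.2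
    have hws : w t₀ = c * t₀ ^ p + K + ε := rfl
    rw [hws] at this; linarith
  have hst₀ : s < t₀ := lt_of_le_of_ne hsS.1.2 hnt
  have hgt : ∀ u : ℝ, s < u → u ≤ t₀ → w u < y u := by
    intro u hu hut
    by_contra hle
    push_neg at hle
    have huS : u ∈ S := ⟨⟨le_trans hsS.1.1 hu.le, hut⟩, by simp only [mem_preimage, mem_Iic]; linarith⟩
    exact absurd (le_csSup hSbdd huS) (not_le.2 hu)
  set d : ℝ := (-A * (y s) ^ α + B) - c * (p * s ^ (p - 1)) with hd
  have hgd : HasDerivAt (fun u => y u - w u) d s :=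
    (hderiv s hspos).sub (hwderiv s hspos)
  -- y s = w s
  have hgs0 : y s - w s = 0 := by
    have htend : Tendsto (fun u => y u - w u) (𝓝[>] s) (𝓝 (y s - w s)) :=
      hgd.continuousAt.continuousWithinAt
    have hge : 0 ≤ y s - w s := by
      refine ge_of_tendsto htend ?_
      filter_upwards [Ioo_mem_nhdsGT hst₀] with u hu
      exact (sub_pos.2 (hgt u hu.1 hu.2.le)).le
    have hsle : y s - w s ≤ 0 := hsS.2
    linarith
  have hdneg : d < 0 := by
    have hys : y s = w s := by linarith
    have := hsuper s hspos
    rw [hd, hys]; linarith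
  have hdnn : 0 ≤ d := by
    have hslope := hasDerivAt_iff_tendsto_slope.1 hgd
    have htend2 : Tendsto (slope (fun u => y u - w u) s) (𝓝[>] s) (𝓝 d) :=
      hslope.mono_left (nhdsWithin_mono s (fun x hx => hx.ne'))
    refine ge_of_tendsto htend2 ?_
    filter_upwards [Ioo_mem_nhdsGT hst₀] with u hu
    have h1 := hgt u hu.1 hu.2.le
    have h2 : (0:ℝ) ≤ u - s := by linarith [hu.1]
    have h3 : (0:ℝ) ≤ (y u - w u) - (y s - w s) := by linarith
    simpa [slope_def_field] using div_nonneg h3 h2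
  linarith
end

section
/- Let A > 0, B ≥ 0 and α > 1 be real numbers and let y₀ ≥ 0. Then there exists a nonnegative solution y of the initial value problem (⋆), and it satisfies y(t) ≤ max(y₀, (B/A)^{1/α}) for all t ≥ 0. -/
open Set MeasureTheory intervalIntegral

lemma rpow_sub_rpow_le (α : ℝ) (hα : 1 < α) {s b : ℝ} (hs : 0 ≤ s) (hsb : s ≤ b) :
    b ^ α - s ^ α ≤ α * b ^ (α - 1) * (b - s) := by
  rcases eq_or_lt_of_le hsb with rfl | h
  · simp
  have hd : ∀ x : ℝ, HasDerivAt (fun x : ℝ => x ^ α) (α * x ^ (α - 1)) x := by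
    intro x
    simpa [mul_comm] using Real.hasDerivAt_rpow_const (x := x) (p := α) (Or.inr hα.le)
  have hcont : ContinuousOn (fun x : ℝ => x ^ α) (Set.Icc s b) :=
    fun x _ => ((hd x).continuousAt).continuousWithinAt
  obtain ⟨ξ, hξ, hξ'⟩ := exists_hasDerivAt_eq_slope (fun x : ℝ => x ^ α)
    (fun x => α * x ^ (α - 1)) h hcont (fun x _ => hd x)
  have hξ0 : 0 ≤ ξ := hs.trans hξ.1.le
  have hle : ξ ^ (α - 1) ≤ b ^ (α - 1) :=
    Real.rpow_le_rpow hξ0 hξ.2.le (by linarith)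
  have hb0 : 0 < b - s := by linarith
  have h1 : b ^ α - s ^ α = (α * ξ ^ (α - 1)) * (b - s) := by
    rw [hξ']; field_simp
  rw [h1]
  have hα0 : 0 < α := by linarith
  have := mul_le_mul_of_nonneg_left hle hα0.le
  nlinarith

lemma core_ode (a b C : ℝ) (hab : a < b) (hC : 0 < C) (f : ℝ → ℝ)
    (hf : ContinuousOn f (Set.Ico a b))
    (hpos : ∀ s ∈ Set.Ico a b, 0 < f s)
    (hbd : ∀ s ∈ Set.Ico a b, f s ≤ C * (b - s)) :
    ∃ y : ℝ → ℝ, ContinuousOn y (Set.Ici 0) ∧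
      (∀ t, 0 < t → HasDerivAt y (f (y t)) t) ∧ y 0 = a ∧
      ∀ t, 0 ≤ t → y t ∈ Set.Ico a b := by
  set g : ℝ → ℝ := fun s => (f s)⁻¹ with hgdef
  have hgc : ContinuousOn g (Set.Ico a b) := hf.inv₀ fun x hx => (hpos x hx).ne'
  have hsub : ∀ u ∈ Set.Ico a b, ∀ v ∈ Set.Ico a b, Set.uIcc u v ⊆ Set.Ico a b := by
    intro u hu v hv x hx
    rcases hx with ⟨h1, h2⟩
    constructor
    · exact le_trans (le_min hu.1 hv.1) h1
    · exact lt_of_le_of_lt h2 (max_lt hu.2 hv.2)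
  have hgint : ∀ u ∈ Set.Ico a b, ∀ v ∈ Set.Ico a b,
      IntervalIntegrable g volume u v := fun u hu v hv =>
    (hgc.mono (hsub u hu v hv)).intervalIntegrable
  have haI : a ∈ Set.Ico a b := ⟨le_rfl, hab⟩
  set G : ℝ → ℝ := fun u => ∫ s in a..u, g s with hGdef
  have hG0 : G a = 0 := intervalIntegral.integral_same
  have hGmono : StrictMonoOn G (Set.Ico a b) := by
    intro u hu v hv huv
    have h1 : G u + ∫ s in u..v, g s = G v :=
      intervalIntegral.integral_add_adjacent_intervals (hgint a haI u hu) (hgint u hu v hv)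
    have h2 : 0 < ∫ s in u..v, g s := by
      apply intervalIntegral.intervalIntegral_pos_of_pos_on (hgint u hu v hv) _ huv
      intro x hx
      exact inv_pos.2 (hpos x ⟨le_trans hu.1 hx.1.le, hx.2.trans hv.2⟩)
    linarith
  have hGcont : ∀ u ∈ Set.Ico a b, ContinuousOn G (Set.Icc a u) := by
    intro u hu
    have : IntegrableOn g (Set.uIcc a u) volume := by
      rw [Set.uIcc_of_le hu.1]
      exact (hgc.mono fun x hx => ⟨hx.1, lt_of_le_of_lt hx.2 hu.2⟩).integrableOn_Icc
    simpa [Set.uIcc_of_le hu.1] using intervalIntegral.continuousOn_primitive_interval this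
  have hGbig : ∀ M : ℝ, ∃ u ∈ Set.Ico a b, M ≤ G u := by
    intro M
    set ε := min (b - a) (Real.exp (Real.log (b - a) - C * M)) with hεdef
    have hε0 : 0 < ε := lt_min (by linarith) (Real.exp_pos _)
    have hεba : ε ≤ b - a := min_le_left _ _
    set u := b - ε with hudef
    have hu : u ∈ Set.Ico a b := ⟨by simp only [hudef]; linarith, by simp only [hudef]; linarith⟩
    refine ⟨u, hu, ?_⟩
    have hcomp : ∀ s ∈ Set.Icc a u, (C * (b - s))⁻¹ ≤ g s := by
      intro s hs
      have hsI : s ∈ Set.Ico a b := ⟨hs.1, lt_of_le_of_lt hs.2 hu.2⟩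
      exact inv_anti₀ (hpos s hsI) (hbd s hsI)
    have hcont2 : ContinuousOn (fun s : ℝ => (C * (b - s))⁻¹) (Set.Icc a u) := by
      apply ContinuousOn.inv₀
      · fun_prop
      · intro s hs
        have : 0 < b - s := by rcases hs with ⟨_, h2⟩; simp only [hudef] at h2; linarith
        positivity
    have hint2 : IntervalIntegrable (fun s : ℝ => (C * (b - s))⁻¹) volume a u := by
      apply ContinuousOn.intervalIntegrable
      rwa [Set.uIcc_of_le hu.1]
    have hmono := intervalIntegral.integral_mono_on hu.1 hint2 (hgint a haI u hu) hcomp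
    have hcalc : (∫ s in a..u, (C * (b - s))⁻¹) =
        -(C⁻¹ * Real.log (b - u)) - -(C⁻¹ * Real.log (b - a)) := by
      apply intervalIntegral.integral_eq_sub_of_hasDerivAt
        (f := fun x : ℝ => -(C⁻¹ * Real.log (b - x))) _ hint2
      intro s hs
      rw [Set.uIcc_of_le hu.1] at hs
      have hbs : 0 < b - s := by rcases hs with ⟨_, h2⟩; simp only [hudef] at h2; linarith
      have h1 : HasDerivAt (fun x : ℝ => b - x) (-1) s := by
        simpa using (hasDerivAt_id s).const_sub b
      have h2 := (Real.hasDerivAt_log hbs.ne').comp s h1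
      have h3 := (h2.const_mul C⁻¹).neg
      convert h3 using 1
      · rfl
      rw [mul_inv]
      field_simp
    have hbu : b - u = ε := by simp [hudef]
    have hlog : Real.log ε ≤ Real.log (b - a) - C * M :=
      (Real.log_le_log hε0 (min_le_right _ _)).trans_eq (Real.log_exp _)
    have hfin : M ≤ ∫ s in a..u, (C * (b - s))⁻¹ := by
      rw [hcalc, hbu]
      have h4 : C * M ≤ Real.log (b - a) - Real.log ε := by linarith
      have h5 := mul_le_mul_of_nonneg_left h4 (le_of_lt (inv_pos.2 hC))
      have h6 : C⁻¹ * (Real.log (b - a) - Real.log ε)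
          = C⁻¹ * Real.log (b - a) - C⁻¹ * Real.log ε := mul_sub _ _ _
      have h7 : C⁻¹ * (C * M) = M := by field_simp
      linarith
    linarith
  have hsurj : ∀ t : ℝ, 0 ≤ t → ∃ u ∈ Set.Ico a b, G u = t := by
    intro t ht
    obtain ⟨u₀, hu₀, hMu⟩ := hGbig t
    have htmem : t ∈ Set.Icc (G a) (G u₀) := by rw [hG0]; exact ⟨ht, hMu⟩
    obtain ⟨u, hu, hGu⟩ := intermediate_value_Icc hu₀.1 (hGcont u₀ hu₀) htmem
    exact ⟨u, ⟨hu.1, lt_of_le_of_lt hu.2 hu₀.2⟩, hGu⟩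
  set y : ℝ → ℝ := fun t => sSup {u | u ∈ Set.Ico a b ∧ G u ≤ t} with hydef
  have hyspec : ∀ t : ℝ, 0 ≤ t → y t ∈ Set.Ico a b ∧ G (y t) = t := by
    intro t ht
    obtain ⟨u, huI, hGu⟩ := hsurj t ht
    have hgreat : IsGreatest {u | u ∈ Set.Ico a b ∧ G u ≤ t} u := by
      constructor
      · exact ⟨huI, le_of_eq hGu⟩
      · intro v hv
        by_contra hlt
        push_neg at hlt
        have := hGmono huI hv.1 hlt
        rw [hGu] at this
        exact absurd hv.2 (not_le.2 this)
    have : y t = u := by rw [hydef]; exact hgreat.csSup_eq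
    rw [this]; exact ⟨huI, hGu⟩
  have hGinj := hGmono.injOn
  have hy0 : y 0 = a := by
    apply hGinj (hyspec 0 le_rfl).1 haI
    rw [(hyspec 0 le_rfl).2, hG0]
  have hstrict : StrictMonoOn y (Set.Ici 0) := by
    intro s hs t ht hst
    have h1 := hyspec s hs
    have h2 := hyspec t ht
    by_contra hcon
    push_neg at hcon
    have := hGmono.monotoneOn h2.1 h1.1 hcon
    rw [h1.2, h2.2] at this
    exact absurd hst (not_lt.2 this)
  have hGnonneg : ∀ u ∈ Set.Ico a b, 0 ≤ G u := by
    intro u hu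
    rcases eq_or_lt_of_le hu.1 with h | h
    · rw [← h, hG0]
    · have := hGmono haI hu h
      rw [hG0] at this
      exact this.le
  have hleft : ∀ u ∈ Set.Ico a b, y (G u) = u := fun u hu =>
    hGinj (hyspec _ (hGnonneg u hu)).1 hu (hyspec _ (hGnonneg u hu)).2
  have hyapos : ∀ t : ℝ, 0 < t → y t ∈ Set.Ioo a b := by
    intro t ht
    have h1 := hyspec t ht.le
    refine ⟨lt_of_le_of_ne h1.1.1 ?_, h1.1.2⟩
    intro h
    have h2 : G a = t := by rw [h]; exact h1.2
    rw [hG0] at h2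
    linarith
  have hcontAt : ∀ t : ℝ, 0 < t → ContinuousAt y t := by
    intro t ht
    apply hstrict.continuousAt_of_image_mem_nhds (Ici_mem_nhds ht)
    apply Filter.mem_of_superset (isOpen_Ioo.mem_nhds (hyapos t ht))
    intro u hu
    have huI : u ∈ Set.Ico a b := ⟨hu.1.le, hu.2⟩
    exact ⟨G u, hGnonneg u huI, hleft u huI⟩
  have hcont : ContinuousOn y (Set.Ici 0) := by
    intro t ht
    rcases eq_or_lt_of_le (Set.mem_Ici.mp ht) with h | h
    · rw [← h]
      apply hstrict.continuousWithinAt_right_of_exists_between self_mem_nhdsWithin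
      intro v hv
      rw [hy0] at hv
      set u := min v ((a + b) / 2) with hu
      have hua : a < u := lt_min hv (by linarith)
      have hub : u ∈ Set.Ico a b := ⟨hua.le, lt_of_le_of_lt (min_le_right _ _) (by linarith)⟩
      refine ⟨G u, hGnonneg u hub, ?_⟩
      rw [hleft u hub, hy0]
      exact ⟨hua, min_le_left _ _⟩
    · exact (hcontAt t h).continuousWithinAt
  have hderiv : ∀ t : ℝ, 0 < t → HasDerivAt y (f (y t)) t := by
    intro t ht
    have hsp := hyspec t ht.le
    have hyt := hyapos t ht
    have hGder : HasDerivAt G (g (y t)) (y t) := by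
      apply intervalIntegral.integral_hasDerivAt_right (hgint a haI _ hsp.1)
      · exact (hgc.mono Set.Ioo_subset_Ico_self).stronglyMeasurableAtFilter isOpen_Ioo _ hyt
      · exact (hgc.mono Set.Ioo_subset_Ico_self).continuousAt (isOpen_Ioo.mem_nhds hyt)
    have hfg : ∀ᶠ s in nhds t, G (y s) = s := by
      filter_upwards [Ioi_mem_nhds ht] with s hs
      exact (hyspec s (le_of_lt hs)).2
    have hne : g (y t) ≠ 0 := inv_ne_zero (hpos _ hsp.1).ne'
    have := HasDerivAt.of_local_left_inverse (hcontAt t ht) hGder hne hfg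
    simpa [hgdef, inv_inv] using this
  exact ⟨y, hcont, hderiv, hy0, fun t ht => (hyspec t ht).1⟩

/-- For `A > 0`, `B ≥ 0`, `α > 1` and `y₀ ≥ 0` there exists a
nonnegative solution `y` of `y' = -A y^α + B`, `y 0 = y₀`, and it satisfies
`y t ≤ max y₀ ((B/A)^(1/α))` for all `t ≥ 0`. -/
theorem stmt6 (A B α : ℝ) (hA : 0 < A) (hB : 0 ≤ B) (hα : 1 < α)
    (y₀ : ℝ) (hy₀ : 0 ≤ y₀) :
    ∃ y : ℝ → ℝ,
      ContinuousOn y (Set.Ici 0) ∧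
      (∀ t : ℝ, 0 < t → HasDerivAt y (-A * (y t) ^ α + B) t) ∧
      y 0 = y₀ ∧
      (∀ t : ℝ, 0 ≤ t → 0 ≤ y t) ∧
      (∀ t : ℝ, 0 ≤ t → y t ≤ max y₀ ((B / A) ^ (1 / α))) := by
  have hα0 : 0 < α := by linarith
  set M : ℝ := (B / A) ^ (1 / α) with hMdef
  have hM0 : 0 ≤ M := Real.rpow_nonneg (div_nonneg hB hA.le) _
  have hMα : M ^ α = B / A := by
    rw [hMdef, ← Real.rpow_mul (div_nonneg hB hA.le), one_div_mul_cancel hα0.ne', Real.rpow_one]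
  have hAM : A * M ^ α = B := by rw [hMα]; field_simp
  have hrc : Continuous fun x : ℝ => x ^ α := by
    rw [continuous_iff_continuousAt]
    intro x
    exact Real.continuousAt_rpow_const x α (Or.inr hα0.le)
  rcases lt_trichotomy y₀ M with hlt | heq | hgt
  · -- y₀ < M : increasing solution
    have hMpos : 0 < M := lt_of_le_of_lt hy₀ hlt
    obtain ⟨y, hc, hd, h0, hmem⟩ := core_ode y₀ M (A * α * M ^ (α - 1)) hlt
      (by positivity) (fun s => -A * s ^ α + B)
      (((continuous_const.mul hrc).add continuous_const).continuousOn)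
      (by
        intro s hs
        have hs0 : 0 ≤ s := hy₀.trans hs.1
        have h1 : s ^ α < M ^ α := Real.rpow_lt_rpow hs0 hs.2 hα0
        show 0 < -A * s ^ α + B
        nlinarith [mul_lt_mul_of_pos_left h1 hA])
      (by
        intro s hs
        have hs0 : 0 ≤ s := hy₀.trans hs.1
        have h1 := rpow_sub_rpow_le α hα hs0 hs.2.le
        show -A * s ^ α + B ≤ A * α * M ^ (α - 1) * (M - s)
        nlinarith [mul_le_mul_of_nonneg_left h1 hA.le])
    refine ⟨y, hc, fun t ht => hd t ht, h0, fun t ht => hy₀.trans (hmem t ht).1,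
      fun t ht => le_trans (hmem t ht).2.le (le_max_right _ _)⟩
  · -- y₀ = M : constant solution
    refine ⟨fun _ => y₀, continuousOn_const, ?_, rfl, fun _ _ => hy₀, fun _ _ => le_max_left _ _⟩
    intro t ht
    have : -A * y₀ ^ α + B = 0 := by rw [heq]; rw [hMα]; field_simp; ring
    rw [this]
    exact hasDerivAt_const t y₀
  · -- M < y₀ : decreasing solution, via reflection
    have hy₀pos : 0 < y₀ := lt_of_le_of_lt hM0 hgt
    obtain ⟨z, hc, hd, h0, hmem⟩ := core_ode M y₀ (A * α * y₀ ^ (α - 1)) hgt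
      (by positivity) (fun s => A * (M + y₀ - s) ^ α - B)
      ((continuous_const.mul (hrc.comp (continuous_const.sub continuous_id))).sub
        continuous_const).continuousOn
      (by
        intro s hs
        have hw : M < M + y₀ - s := by rcases hs with ⟨_, h2⟩; linarith
        have h1 : M ^ α < (M + y₀ - s) ^ α := Real.rpow_lt_rpow hM0 hw hα0
        show 0 < A * (M + y₀ - s) ^ α - B
        nlinarith [mul_lt_mul_of_pos_left h1 hA])
      (by
        intro s hs
        set w := M + y₀ - s with hwdef
        have hwM : M ≤ w := by rcases hs with ⟨_, h2⟩; simp only [hwdef]; linarith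
        have hwy : w ≤ y₀ := by rcases hs with ⟨h1, _⟩; simp only [hwdef]; linarith
        have h1 := rpow_sub_rpow_le α hα hM0 hwM
        have h2 : w ^ (α - 1) ≤ y₀ ^ (α - 1) :=
          Real.rpow_le_rpow (hM0.trans hwM) hwy (by linarith)
        have hwM' : w - M = y₀ - s := by simp only [hwdef]; ring
        show A * (M + y₀ - s) ^ α - B ≤ A * α * y₀ ^ (α - 1) * (y₀ - s)
        have hws : M + y₀ - s = w := by simp only [hwdef]
        rw [hws, ← hwM']
        have ha1 := mul_le_mul_of_nonneg_left h1 hA.le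
        have ha2 : (A * α * (w - M)) * w ^ (α - 1) ≤ (A * α * (w - M)) * y₀ ^ (α - 1) :=
          mul_le_mul_of_nonneg_left h2
            (mul_nonneg (mul_nonneg hA.le hα0.le) (by linarith : (0:ℝ) ≤ w - M))
        nlinarith [ha1, ha2, hAM])
    refine ⟨fun t => M + y₀ - z t, continuousOn_const.sub hc, ?_, by show M + y₀ - z 0 = y₀; rw [h0]; ring,
      fun t ht => ?_, fun t ht => ?_⟩
    · intro t ht
      have := (hd t ht).const_sub (M + y₀)
      show HasDerivAt (fun x => M + y₀ - z x) (-A * (M + y₀ - z t) ^ α + B) t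
      rw [show -A * (M + y₀ - z t) ^ α + B = -(A * (M + y₀ - z t) ^ α - B) by ring]
      exact this
    · have := (hmem t ht).2
      show 0 ≤ M + y₀ - z t
      linarith [hM0]
    · have h1 := (hmem t ht).1
      have h2 : M + y₀ - z t ≤ y₀ := by linarith [h1]
      exact h2.trans (le_max_left _ _)
end

section
/- Let A > 0, B ≥ 0 and α > 1 be real numbers and let y₀ ≥ 0. If y and ỹ are both nonnegative solutions of the initial value problem (⋆) with the same initial value y₀, then y(t) = ỹ(t) for all t ≥ 0. -/
open Set Filter Real Topology

/-- For `A > 0`, `B ≥ 0`, `α > 1` and `y₀ ≥ 0`, any two nonnegative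
solutions of `y' = -A y^α + B`, `y 0 = y₀` coincide on `[0,∞)`. -/
theorem stmt7 (A B α : ℝ) (hA : 0 < A) (hB : 0 ≤ B) (hα : 1 < α)
    (y₀ : ℝ) (hy₀ : 0 ≤ y₀) (y z : ℝ → ℝ)
    (hcont : ContinuousOn y (Set.Ici 0))
    (hderiv : ∀ t : ℝ, 0 < t → HasDerivAt y (-A * (y t) ^ α + B) t)
    (hinit : y 0 = y₀)
    (hnonneg : ∀ t : ℝ, 0 ≤ t → 0 ≤ y t)
    (hcont' : ContinuousOn z (Set.Ici 0))
    (hderiv' : ∀ t : ℝ, 0 < t → HasDerivAt z (-A * (z t) ^ α + B) t)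
    (hinit' : z 0 = y₀)
    (hnonneg' : ∀ t : ℝ, 0 ≤ t → 0 ≤ z t) :
    ∀ t : ℝ, 0 ≤ t → y t = z t := by
  intro t₀ ht₀
  rcases eq_or_lt_of_le ht₀ with h0 | h0
  · rw [← h0, hinit, hinit']
  have hIcc : Set.Icc (0 : ℝ) t₀ ⊆ Set.Ici (0 : ℝ) := fun x hx => hx.1
  -- bounds on the solutions on [0, t₀]
  obtain ⟨Cy, hCy⟩ := isCompact_Icc.exists_bound_of_continuousOn (hcont.mono hIcc)
  obtain ⟨Cz, hCz⟩ := isCompact_Icc.exists_bound_of_continuousOn (hcont'.mono hIcc)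
  set C : ℝ := max (max Cy Cz) 0 with hCdef
  have hC0 : 0 ≤ C := le_max_right _ _
  have hyC : ∀ t ∈ Set.Icc (0:ℝ) t₀, y t ∈ Set.Icc (0:ℝ) C := by
    intro t ht
    refine ⟨hnonneg t ht.1, ?_⟩
    have := hCy t ht
    calc y t ≤ |y t| := le_abs_self _
      _ ≤ Cy := by simpa [Real.norm_eq_abs] using this
      _ ≤ C := le_trans (le_max_left _ _) (le_max_left _ _)
  have hzC : ∀ t ∈ Set.Icc (0:ℝ) t₀, z t ∈ Set.Icc (0:ℝ) C := by
    intro t ht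
    refine ⟨hnonneg' t ht.1, ?_⟩
    have := hCz t ht
    calc z t ≤ |z t| := le_abs_self _
      _ ≤ Cz := by simpa [Real.norm_eq_abs] using this
      _ ≤ C := le_trans (le_max_right _ _) (le_max_left _ _)
  -- Lipschitz constant
  set K : NNReal := Real.toNNReal (A * α * C ^ (α - 1)) with hKdef
  have hKnn : 0 ≤ A * α * C ^ (α - 1) := by positivity
  have hLip : ∀ t : ℝ, LipschitzOnWith K (fun x : ℝ => -A * x ^ α + B) (Set.Icc 0 C) := by
    intro _
    apply (convex_Icc (0:ℝ) C).lipschitzOnWith_of_nnnorm_hasDerivWithin_le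
      (f' := fun x : ℝ => -A * (α * x ^ (α - 1)))
    · intro x hx
      exact (((Real.hasDerivAt_rpow_const (Or.inr hα.le)).const_mul
        (-A)).add_const B).hasDerivWithinAt
    · intro x hx
      rw [← NNReal.coe_le_coe, hKdef, Real.coe_toNNReal _ hKnn, coe_nnnorm, Real.norm_eq_abs]
      have hx1 : (0:ℝ) ≤ x := hx.1
      have hmon : x ^ (α - 1) ≤ C ^ (α - 1) :=
        Real.rpow_le_rpow hx1 hx.2 (by linarith)
      have hxp : 0 ≤ x ^ (α - 1) := Real.rpow_nonneg hx1 _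
      rw [abs_mul, abs_mul, abs_neg, abs_of_pos hA, abs_of_pos (by linarith : (0:ℝ) < α),
        abs_of_nonneg hxp, mul_assoc]
      exact mul_le_mul_of_nonneg_left
        (mul_le_mul_of_nonneg_left hmon (by linarith)) hA.le
  -- key estimate: for every 0 < ε ≤ t₀
  have key : ∀ ε : ℝ, 0 < ε → ε ≤ t₀ →
      dist (y t₀) (z t₀) ≤ dist (y ε) (z ε) * Real.exp (K * t₀) := by
    intro ε hε hεt
    have hsub : Set.Icc ε t₀ ⊆ Set.Icc 0 t₀ := Set.Icc_subset_Icc hε.le le_rfl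
    have hbound := dist_le_of_trajectories_ODE_of_mem
      (v := fun _ x => -A * x ^ α + B) (s := fun _ => Set.Icc (0:ℝ) C)
      (K := K) (f := y) (g := z) (a := ε) (b := t₀) (δ := dist (y ε) (z ε))
      (fun t _ => hLip t)
      (hcont.mono (fun x hx => le_trans hε.le hx.1))
      (fun t ht => (hderiv t (lt_of_lt_of_le hε ht.1)).hasDerivWithinAt)
      (fun t ht => hyC t (hsub (Set.Ico_subset_Icc_self ht)))
      (hcont'.mono (fun x hx => le_trans hε.le hx.1))
      (fun t ht => (hderiv' t (lt_of_lt_of_le hε ht.1)).hasDerivWithinAt)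
      (fun t ht => hzC t (hsub (Set.Ico_subset_Icc_self ht)))
      le_rfl t₀ ⟨hεt, le_rfl⟩
    calc dist (y t₀) (z t₀) ≤ dist (y ε) (z ε) * Real.exp (K * (t₀ - ε)) := hbound
      _ ≤ dist (y ε) (z ε) * Real.exp (K * t₀) := by
          apply mul_le_mul_of_nonneg_left _ dist_nonneg
          apply Real.exp_le_exp.mpr
          have : (0:ℝ) ≤ (K:ℝ) := K.coe_nonneg
          nlinarith
  -- take the limit ε → 0⁺
  have hy0 : Filter.Tendsto y (𝓝[>] (0:ℝ)) (𝓝 y₀) := by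
    have := (hcont 0 (Set.mem_Ici.mpr le_rfl)).tendsto
    rw [hinit] at this
    exact this.mono_left (nhdsWithin_mono _ Set.Ioi_subset_Ici_self)
  have hz0 : Filter.Tendsto z (𝓝[>] (0:ℝ)) (𝓝 y₀) := by
    have := (hcont' 0 (Set.mem_Ici.mpr le_rfl)).tendsto
    rw [hinit'] at this
    exact this.mono_left (nhdsWithin_mono _ Set.Ioi_subset_Ici_self)
  have hlim : Filter.Tendsto (fun ε => dist (y ε) (z ε) * Real.exp (K * t₀))
      (𝓝[>] (0:ℝ)) (𝓝 0) := by
    have := (hy0.dist hz0).mul_const (Real.exp (K * t₀))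
    simpa using this
  have hev : ∀ᶠ ε in 𝓝[>] (0:ℝ),
      dist (y t₀) (z t₀) ≤ dist (y ε) (z ε) * Real.exp (K * t₀) := by
    filter_upwards [Ioo_mem_nhdsGT h0] with ε hε
    exact key ε hε.1 hε.2.le
  have : dist (y t₀) (z t₀) ≤ 0 := ge_of_tendsto hlim hev
  exact dist_le_zero.mp this
end
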